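/- Fix a real number q > 1 and set τ = 2π/log q. For an integer n ≥ 1 let Φ_n be the function, holomorphic on ℂ \ (τ/2)ℤ, given by Φ_n(z) = (1/(q+1))·[ q^{1−n/2}·(q^{iz(n+1)} − q^{−iz(n+1)}) − q^{−n/2}·(q^{iz(n−1)} − q^{−iz(n−1)}) ] / (q^{iz} − q^{−iz}), and set Φ_0(z) = 1. Let α ∈ ℝ, z_0 = α − i/2, N ≥ 0 an integer, and c_0, c_1, …, c_N ∈ ℂ. If sup_{n ∈ ℕ} | ∑_{m=0}^{N} c_m · (iteratedDeriv m (z ↦ Φ_n(z))) (z_0) | < ∞, then c_m = 0 for every m with 1 ≤ m ≤ N. -/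

import Mathlib

/-- `q^w = exp(w log q)`. -/
noncomputable def qpow (q : ℝ) (w : ℂ) : ℂ := Complex.exp (w * (Real.log q : ℂ))

/-- `τ = 2π / log q`. -/
noncomputable def tauq (q : ℝ) : ℝ := 2 * Real.pi / Real.log q

/-- The elementary spherical function value `φ_z(n)` on a homogeneous tree of degree
`q+1`: `φ_z(0) = 1` and for `n ≥ 1`,
`φ_z(n) = (1/(q+1))·[q^{1-n/2}(q^{iz(n+1)} - q^{-iz(n+1)}) - q^{-n/2}(q^{iz(n-1)} - q^{-iz(n-1)})] / (q^{iz} - q^{-iz})`. -/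
noncomputable def phiSph (q : ℝ) (z : ℂ) (n : ℕ) : ℂ :=
  if n = 0 then 1 else
    (1 / ((q : ℂ) + 1)) *
      ((qpow q (1 - (n : ℂ) / 2) *
          (qpow q (Complex.I * z * ((n : ℂ) + 1)) - qpow q (-(Complex.I * z) * ((n : ℂ) + 1))) -
        qpow q (-(n : ℂ) / 2) *
          (qpow q (Complex.I * z * ((n : ℂ) - 1)) - qpow q (-(Complex.I * z) * ((n : ℂ) - 1)))) /
        (qpow q (Complex.I * z) - qpow q (-(Complex.I * z))))

open Complex Finset Filter Topology

lemma qpow_ne_zero (q : ℝ) (w : ℂ) : qpow q w ≠ 0 := Complex.exp_ne_zero _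

lemma qpow_int_mul (q : ℝ) (z : ℂ) (k : ℤ) :
    qpow q (Complex.I * z * (k : ℂ)) = (qpow q (Complex.I * z)) ^ k := by
  unfold qpow
  rw [show Complex.I * z * (k:ℂ) * (Real.log q : ℂ) = (k:ℂ) * (Complex.I * z * (Real.log q : ℂ)) by ring,
    Complex.exp_int_mul]

lemma qpow_neg_int_mul (q : ℝ) (z : ℂ) (k : ℤ) :
    qpow q (-(Complex.I * z) * (k : ℂ)) = (qpow q (Complex.I * z)) ^ (-k) := by
  unfold qpow
  rw [show -(Complex.I * z) * (k:ℂ) * (Real.log q : ℂ) = ((-k : ℤ):ℂ) * (Complex.I * z * (Real.log q : ℂ)) by push_cast; ring,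
    Complex.exp_int_mul]

lemma qpow_inv (q : ℝ) (z : ℂ) :
    qpow q (-(Complex.I * z)) = (qpow q (Complex.I * z))⁻¹ := by
  unfold qpow
  rw [show -(Complex.I * z) * (Real.log q : ℂ) = -(Complex.I * z * (Real.log q : ℂ)) by ring,
    Complex.exp_neg]

lemma qpow_add (q : ℝ) (a b : ℂ) : qpow q (a + b) = qpow q a * qpow q b := by
  unfold qpow; rw [add_mul, Complex.exp_add]

lemma qpow_one (q : ℝ) (hq : 0 < q) : qpow q 1 = (q : ℂ) := by
  unfold qpow
  rw [one_mul, ← Complex.ofReal_exp, Real.exp_log hq]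

lemma qpow_zero (q : ℝ) : qpow q 0 = 1 := by simp [qpow]

/-- geometric telescoping -/
lemma geom_aux (x : ℂ) (hx : x ≠ 0) (k : ℕ) :
    (x - x⁻¹) * ∑ j ∈ Finset.range k, x ^ ((k : ℤ) - 1 - 2 * j) =
      x ^ (k : ℤ) - x ^ (-(k : ℤ)) := by
  induction k with
  | zero => simp
  | succ k ih =>
    rw [Finset.sum_range_succ]
    have h1 : ∑ j ∈ Finset.range k, x ^ (((k:ℕ)+1 : ℤ) - 1 - 2 * j)
        = x * ∑ j ∈ Finset.range k, x ^ ((k : ℤ) - 1 - 2 * j) := by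
      rw [Finset.mul_sum]
      refine Finset.sum_congr rfl fun j _ => ?_
      rw [← zpow_one_add₀ hx]
      congr 1; push_cast; ring
    push_cast
    rw [h1]
    have h2 : ((k:ℤ) + 1 - 1 - 2 * k) = -(k:ℤ) + 1 - 1 := by ring
    rw [h2]
    set S := ∑ j ∈ Finset.range k, x ^ ((k : ℤ) - 1 - 2 * j) with hS
    have expand : (x - x⁻¹) * (x * S + x ^ (-(k:ℤ) + 1 - 1))
        = x * ((x - x⁻¹) * S) + (x - x⁻¹) * x ^ (-(k:ℤ)) := by
      have : (-(k:ℤ) + 1 - 1) = -(k:ℤ) := by ring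
      rw [this]; ring
    rw [expand, ih, mul_sub]
    have e1 : x * x ^ (k:ℤ) = x ^ ((k:ℤ)+1) := by
      rw [zpow_add_one₀ hx]; ring
    have e2 : x * x ^ (-(k:ℤ)) = x ^ (-(k:ℤ)+1) := by
      rw [show x ^ (-(k:ℤ)+1) = x ^ (-(k:ℤ)) * x from by rw [← zpow_add_one₀ hx]]; ring
    have e3 : x⁻¹ * x ^ (-(k:ℤ)) = x ^ (-((k:ℤ)+1)) := by
      rw [← zpow_neg_one, ← zpow_add₀ hx]; congr 1; ring
    rw [sub_mul, e1, e2, e3]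
    ring


lemma iteratedDeriv_sum_cexp (s : Finset ℕ) (a γ : ℕ → ℂ) (m : ℕ) :
    iteratedDeriv m (fun z : ℂ => ∑ j ∈ s, a j * Complex.exp (γ j * z)) =
      fun z => ∑ j ∈ s, a j * γ j ^ m * Complex.exp (γ j * z) := by
  induction m generalizing a with
  | zero => funext z; simp
  | succ m ih =>
    rw [iteratedDeriv_succ']
    have hd : deriv (fun z : ℂ => ∑ j ∈ s, a j * Complex.exp (γ j * z))
        = fun z => ∑ j ∈ s, (a j * γ j) * Complex.exp (γ j * z) := by
      funext z
      have h : ∀ j ∈ s, HasDerivAt (fun z : ℂ => a j * Complex.exp (γ j * z))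
          ((a j * γ j) * Complex.exp (γ j * z)) z := by
        intro j _
        have h1 : HasDerivAt (fun z : ℂ => γ j * z) (γ j) z := by
          simpa using (hasDerivAt_id z).const_mul (γ j)
        have h2 := (h1.cexp).const_mul (a j)
        exact h2.congr_deriv (by ring)
      exact (HasDerivAt.fun_sum h).deriv
    rw [hd, ih (fun j => a j * γ j)]
    funext z
    refine Finset.sum_congr rfl fun j _ => ?_
    ring


noncomputable def sphCoef (q : ℝ) (n j : ℕ) : ℂ :=
  (1 / ((q:ℂ) + 1)) *
    (qpow q (1 - (n:ℂ)/2) - if j ∈ Finset.Icc 1 (n-1) then qpow q (-(n:ℂ)/2) else 0)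

lemma exp_eq_zpow (q : ℝ) (z : ℂ) (k : ℤ) :
    Complex.exp ((Complex.I * (k:ℂ) * (Real.log q : ℂ)) * z) = (qpow q (Complex.I * z)) ^ k := by
  rw [← qpow_int_mul]; unfold qpow; congr 1; ring

lemma phiSph_eq_sum (q : ℝ) (n : ℕ) (hn : n ≠ 0) (z : ℂ)
    (hz : qpow q (Complex.I * z) ≠ qpow q (-(Complex.I * z))) :
    phiSph q z n = ∑ j ∈ Finset.range (n+1), sphCoef q n j *
      Complex.exp ((Complex.I * ((n:ℂ) - 2*(j:ℂ)) * (Real.log q : ℂ)) * z) := by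
  have hn1 : 1 ≤ n := Nat.one_le_iff_ne_zero.mpr hn
  set x := qpow q (Complex.I * z) with hxdef
  have hx : x ≠ 0 := Complex.exp_ne_zero _
  have hxinv : qpow q (-(Complex.I * z)) = x⁻¹ := qpow_inv q z
  have hD : x - x⁻¹ ≠ 0 := sub_ne_zero.mpr (by rw [← hxinv]; exact hz)
  -- rewrite RHS
  have hRHS : ∑ j ∈ Finset.range (n+1), sphCoef q n j *
      Complex.exp ((Complex.I * ((n:ℂ) - 2*(j:ℂ)) * (Real.log q : ℂ)) * z)
      = (1 / ((q:ℂ)+1)) *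
        (qpow q (1 - (n:ℂ)/2) * ∑ j ∈ Finset.range (n+1), x ^ ((n:ℤ) - 2*j)
         - qpow q (-(n:ℂ)/2) * ∑ j ∈ Finset.range (n-1), x ^ ((n:ℤ) - 2 - 2*j)) := by
    have hexp : ∀ j : ℕ, Complex.exp ((Complex.I * ((n:ℂ) - 2*(j:ℂ)) * (Real.log q : ℂ)) * z)
        = x ^ ((n:ℤ) - 2*j) := by
      intro j
      rw [← exp_eq_zpow q z ((n:ℤ) - 2*j)]
      norm_num
    calc ∑ j ∈ Finset.range (n+1), sphCoef q n j *
          Complex.exp ((Complex.I * ((n:ℂ) - 2*(j:ℂ)) * (Real.log q : ℂ)) * z)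
        = ∑ j ∈ Finset.range (n+1), (1 / ((q:ℂ)+1)) *
            (qpow q (1 - (n:ℂ)/2) * x ^ ((n:ℤ) - 2*j)
             - (if j ∈ Finset.Icc 1 (n-1) then qpow q (-(n:ℂ)/2) * x ^ ((n:ℤ) - 2*j) else 0)) := by
          refine Finset.sum_congr rfl fun j _ => ?_
          rw [hexp j, sphCoef]
          by_cases h : j ∈ Finset.Icc 1 (n-1) <;> simp [h] <;> ring
      _ = (1 / ((q:ℂ)+1)) *
            ((∑ j ∈ Finset.range (n+1), qpow q (1 - (n:ℂ)/2) * x ^ ((n:ℤ) - 2*j))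
             - ∑ j ∈ Finset.range (n+1),
                (if j ∈ Finset.Icc 1 (n-1) then qpow q (-(n:ℂ)/2) * x ^ ((n:ℤ) - 2*j) else 0)) := by
          rw [← Finset.sum_sub_distrib, Finset.mul_sum]
      _ = (1 / ((q:ℂ)+1)) *
            (qpow q (1 - (n:ℂ)/2) * ∑ j ∈ Finset.range (n+1), x ^ ((n:ℤ) - 2*j)
             - ∑ j ∈ Finset.range (n+1),
                (if j ∈ Finset.Icc 1 (n-1) then qpow q (-(n:ℂ)/2) * x ^ ((n:ℤ) - 2*j) else 0)) := by
          rw [← Finset.mul_sum]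
      _ = (1 / ((q:ℂ)+1)) *
            (qpow q (1 - (n:ℂ)/2) * ∑ j ∈ Finset.range (n+1), x ^ ((n:ℤ) - 2*j)
             - qpow q (-(n:ℂ)/2) * ∑ j ∈ Finset.range (n-1), x ^ ((n:ℤ) - 2 - 2*j)) := by
          congr 1
          congr 1
          rw [Finset.sum_ite_mem]
          have hss : Finset.range (n+1) ∩ Finset.Icc 1 (n-1) = Finset.Icc 1 (n-1) := by
            rw [Finset.inter_eq_right]
            intro j hj
            simp only [Finset.mem_Icc] at hj
            simp only [Finset.mem_range]
            omega
          rw [hss, show Finset.Icc 1 (n-1) = Finset.Ico 1 (n-1+1) from (Finset.Ico_add_one_right_eq_Icc _ _).symm,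
            Finset.sum_Ico_eq_sum_range]
          rw [show n - 1 + 1 - 1 = n - 1 by omega, Finset.mul_sum]
          refine Finset.sum_congr rfl fun i _ => ?_
          congr 2
          push_cast
          ring
  rw [hRHS]
  -- now the LHS
  rw [phiSph, if_neg hn]
  have e1 : qpow q (Complex.I * z * ((n:ℂ)+1)) = x ^ ((n:ℤ)+1) := by
    rw [show ((n:ℂ)+1) = (((n:ℤ)+1 : ℤ):ℂ) by push_cast; ring, qpow_int_mul]
  have e2 : qpow q (-(Complex.I * z) * ((n:ℂ)+1)) = x ^ (-((n:ℤ)+1)) := by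
    rw [show ((n:ℂ)+1) = (((n:ℤ)+1 : ℤ):ℂ) by push_cast; ring, qpow_neg_int_mul]
  have e3 : qpow q (Complex.I * z * ((n:ℂ)-1)) = x ^ ((n:ℤ)-1) := by
    rw [show ((n:ℂ)-1) = (((n:ℤ)-1 : ℤ):ℂ) by push_cast; ring, qpow_int_mul]
  have e4 : qpow q (-(Complex.I * z) * ((n:ℂ)-1)) = x ^ (-((n:ℤ)-1)) := by
    rw [show ((n:ℂ)-1) = (((n:ℤ)-1 : ℤ):ℂ) by push_cast; ring, qpow_neg_int_mul]
  rw [e1, e2, e3, e4, hxinv, ← hxdef]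
  have g1 : (x - x⁻¹) * ∑ j ∈ Finset.range (n+1), x ^ ((n:ℤ) - 2*j)
      = x ^ ((n:ℤ)+1) - x ^ (-((n:ℤ)+1)) := by
    have := geom_aux x hx (n+1)
    rw [show ∑ j ∈ Finset.range (n+1), x ^ (((n+1:ℕ):ℤ) - 1 - 2 * j)
        = ∑ j ∈ Finset.range (n+1), x ^ ((n:ℤ) - 2*j) from
      Finset.sum_congr rfl fun j _ => by congr 1; push_cast; ring] at this
    rw [this]
    norm_cast
  have g2 : (x - x⁻¹) * ∑ j ∈ Finset.range (n-1), x ^ ((n:ℤ) - 2 - 2*j)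
      = x ^ ((n:ℤ)-1) - x ^ (-((n:ℤ)-1)) := by
    have := geom_aux x hx (n-1)
    have hc : ((n-1:ℕ):ℤ) = (n:ℤ) - 1 := by
      push_cast [Nat.cast_sub hn1]; ring
    rw [hc] at this
    rw [show ∑ j ∈ Finset.range (n-1), x ^ ((n:ℤ) - 1 - 1 - 2 * j)
        = ∑ j ∈ Finset.range (n-1), x ^ ((n:ℤ) - 2 - 2*j) from
      Finset.sum_congr rfl fun j _ => by congr 1; push_cast; ring] at this
    exact this
  rw [← g1, ← g2]
  congr 1
  rw [div_eq_iff hD]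
  ring


lemma tendsto_geom_mul_poly (w : ℂ) (hw : ‖w‖ < 1) (m : ℕ) :
    Tendsto (fun k : ℕ => w ^ k * (k : ℂ) ^ m) atTop (𝓝 0) := by
  have hs : Summable fun n : ℕ => ‖(n : ℂ) ^ m * w ^ n‖ :=
    summable_norm_pow_mul_geometric_of_norm_lt_one m hw
  have ht := hs.tendsto_atTop_zero
  rw [tendsto_zero_iff_norm_tendsto_zero]
  refine ht.congr fun k => ?_
  rw [mul_comm]

lemma tendsto_geom_shift (w : ℂ) (hw : ‖w‖ < 1) (a : ℂ) (m : ℕ) :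
    Tendsto (fun k : ℕ => w ^ k * ((k : ℂ) + a) ^ m) atTop (𝓝 0) := by
  have h : ∀ k : ℕ, w ^ k * ((k : ℂ) + a) ^ m =
      ∑ i ∈ Finset.range (m + 1),
        (a ^ (m - i) * (Nat.choose m i : ℂ)) * (w ^ k * (k : ℂ) ^ i) := by
    intro k
    rw [add_pow, Finset.mul_sum]
    exact Finset.sum_congr rfl fun i _ => by ring
  refine Tendsto.congr (fun k => (h k).symm) ?_
  have : Tendsto (fun k : ℕ => ∑ i ∈ Finset.range (m + 1),
      (a ^ (m - i) * (Nat.choose m i : ℂ)) * (w ^ k * (k : ℂ) ^ i)) atTop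
      (𝓝 (∑ i ∈ Finset.range (m + 1), (0:ℂ))) := by
    refine tendsto_finset_sum _ fun i _ => ?_
    have := (tendsto_geom_mul_poly w hw i).const_mul (a ^ (m - i) * (Nat.choose m i : ℂ))
    simpa using this
  simpa using this

lemma tendsto_eps (w : ℂ) (hw : ‖w‖ < 1) (N : ℕ) (c : ℕ → ℂ) (b a : ℂ) :
    Tendsto (fun k : ℕ => w ^ k * ∑ m ∈ Finset.range (N + 1), c m * (b * ((k : ℂ) + a)) ^ m)
      atTop (𝓝 0) := by
  have h : ∀ k : ℕ, w ^ k * ∑ m ∈ Finset.range (N + 1), c m * (b * ((k : ℂ) + a)) ^ m =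
      ∑ m ∈ Finset.range (N + 1), (c m * b ^ m) * (w ^ k * ((k : ℂ) + a) ^ m) := by
    intro k
    rw [Finset.mul_sum]
    exact Finset.sum_congr rfl fun i _ => by rw [mul_pow]; ring
  refine Tendsto.congr (fun k => (h k).symm) ?_
  have : Tendsto (fun k : ℕ => ∑ m ∈ Finset.range (N + 1),
      (c m * b ^ m) * (w ^ k * ((k : ℂ) + a) ^ m)) atTop
      (𝓝 (∑ m ∈ Finset.range (N + 1), (0:ℂ))) := by
    refine tendsto_finset_sum _ fun i _ => ?_
    simpa using (tendsto_geom_shift w hw a i).const_mul (c i * b ^ i)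
  simpa using this

lemma tendsto_inv_nat_complex :
    Tendsto (fun k : ℕ => ((k : ℕ) : ℂ)⁻¹) atTop (𝓝 0) := by
  rw [tendsto_zero_iff_norm_tendsto_zero]
  have : Tendsto (fun k : ℕ => 1 / (k : ℝ)) atTop (𝓝 0) := tendsto_one_div_atTop_nhds_zero_nat
  refine this.congr fun k => ?_
  rw [one_div, norm_inv, Complex.norm_natCast]

lemma tendsto_ratio (a : ℂ) (m M : ℕ) (hmM : m ≤ M) :
    Tendsto (fun k : ℕ => ((k : ℂ) + a) ^ m / (k : ℂ) ^ M) atTop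
      (𝓝 (if m = M then 1 else 0)) := by
  have h1 : Tendsto (fun k : ℕ => (1 + a * ((k : ℕ) : ℂ)⁻¹) ^ m) atTop (𝓝 1) := by
    have : Tendsto (fun k : ℕ => 1 + a * ((k : ℕ) : ℂ)⁻¹) atTop (𝓝 1) := by
      have := (tendsto_inv_nat_complex.const_mul a).const_add 1
      simpa using this
    simpa using this.pow m
  have h2 : Tendsto (fun k : ℕ => (((k : ℕ) : ℂ)⁻¹) ^ (M - m)) atTop
      (𝓝 (if m = M then 1 else 0)) := by
    rcases eq_or_lt_of_le hmM with h | h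
    · subst h; simp
    · have := tendsto_inv_nat_complex.pow (M - m)
      rw [zero_pow (by omega : M - m ≠ 0)] at this
      simpa [Nat.ne_of_lt h] using this
  have key : Tendsto (fun k : ℕ => (1 + a * ((k : ℕ) : ℂ)⁻¹) ^ m * (((k : ℕ) : ℂ)⁻¹) ^ (M - m))
      atTop (𝓝 (if m = M then 1 else 0)) := by
    have := h1.mul h2
    simpa using this
  refine key.congr' ?_
  filter_upwards [eventually_ge_atTop 1] with k hk
  have hk0 : ((k : ℕ) : ℂ) ≠ 0 := by
    exact_mod_cast Nat.cast_ne_zero.mpr (by omega)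
  have hsplit : ((k : ℂ)) ^ M = (k : ℂ) ^ m * (k : ℂ) ^ (M - m) := by
    rw [← pow_add]
    congr 1
    omega
  rw [hsplit]
  rw [eq_div_iff (mul_ne_zero (pow_ne_zero _ hk0) (pow_ne_zero _ hk0))]
  have e1 : (1 + a * ((k : ℕ) : ℂ)⁻¹) * (k : ℂ) = (k : ℂ) + a := by
    field_simp
  calc (1 + a * ((k : ℕ) : ℂ)⁻¹) ^ m * (((k : ℕ) : ℂ)⁻¹) ^ (M - m) * ((k : ℂ) ^ m * (k : ℂ) ^ (M - m))
      = ((1 + a * ((k : ℕ) : ℂ)⁻¹) * (k : ℂ)) ^ m * ((((k : ℕ) : ℂ)⁻¹) * (k : ℂ)) ^ (M - m) := by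
        rw [mul_pow, mul_pow]; ring
    _ = ((k : ℂ) + a) ^ m := by rw [e1, inv_mul_cancel₀ hk0, one_pow, mul_one]


/-- real part of `I * (α - I/2) * L` is `L/2`. -/
lemma re_aux (α L : ℝ) : (Complex.I * ((α:ℂ) - Complex.I/2) * (L:ℂ)).re = L / 2 := by
  have h : Complex.I * ((α:ℂ) - Complex.I/2) * (L:ℂ)
      = ((L/2 : ℝ) : ℂ) + ((α*L : ℝ):ℂ) * Complex.I := by
    push_cast
    ring_nf
    rw [Complex.I_sq]
    ring
  rw [h]
  simp

lemma mem_U (q : ℝ) (hq : 1 < q) (α : ℝ) :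
    qpow q (Complex.I * ((α:ℂ) - Complex.I/2)) ≠ qpow q (-(Complex.I * ((α:ℂ) - Complex.I/2))) := by
  have hL : 0 < Real.log q := Real.log_pos hq
  intro h
  have habs := congrArg norm h
  rw [show (qpow q (Complex.I * ((α:ℂ) - Complex.I/2))) =
    Complex.exp (Complex.I * ((α:ℂ) - Complex.I/2) * (Real.log q : ℂ)) from rfl] at habs
  rw [show (qpow q (-(Complex.I * ((α:ℂ) - Complex.I/2)))) =
    Complex.exp (-(Complex.I * ((α:ℂ) - Complex.I/2)) * (Real.log q : ℂ)) from rfl] at habs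
  rw [Complex.norm_exp, Complex.norm_exp] at habs
  have h1 : (Complex.I * ((α:ℂ) - Complex.I/2) * (Real.log q : ℂ)).re = Real.log q / 2 :=
    re_aux α (Real.log q)
  have h2 : (-(Complex.I * ((α:ℂ) - Complex.I/2)) * (Real.log q : ℂ)).re = -(Real.log q / 2) := by
    rw [show -(Complex.I * ((α:ℂ) - Complex.I/2)) * (Real.log q : ℂ)
      = -(Complex.I * ((α:ℂ) - Complex.I/2) * (Real.log q : ℂ)) by ring, Complex.neg_re, h1]
  rw [h1, h2] at habs
  have := Real.exp_eq_exp.mp habs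
  linarith

lemma iteratedDeriv_phiSph (q : ℝ) (hq : 1 < q) (α : ℝ) (n : ℕ) (hn : n ≠ 0) (m : ℕ) :
    iteratedDeriv m (fun z : ℂ => phiSph q z n) ((α:ℂ) - Complex.I/2) =
      ∑ j ∈ Finset.range (n+1), sphCoef q n j * (Complex.I * ((n:ℂ) - 2*(j:ℂ)) * (Real.log q : ℂ)) ^ m *
        Complex.exp ((Complex.I * ((n:ℂ) - 2*(j:ℂ)) * (Real.log q : ℂ)) * ((α:ℂ) - Complex.I/2)) := by
  set z₀ : ℂ := (α:ℂ) - Complex.I/2 with hz₀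
  have hUopen : IsOpen {z : ℂ | qpow q (Complex.I * z) ≠ qpow q (-(Complex.I * z))} := by
    apply isOpen_ne_fun
    · exact Complex.continuous_exp.comp (by fun_prop)
    · exact Complex.continuous_exp.comp (by fun_prop)
  have hz₀U : z₀ ∈ {z : ℂ | qpow q (Complex.I * z) ≠ qpow q (-(Complex.I * z))} := mem_U q hq α
  have hev : (fun z => phiSph q z n) =ᶠ[𝓝 z₀]
      (fun z => ∑ j ∈ Finset.range (n+1), sphCoef q n j *
        Complex.exp ((Complex.I * ((n:ℂ) - 2*(j:ℂ)) * (Real.log q : ℂ)) * z)) := by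
    filter_upwards [hUopen.mem_nhds hz₀U] with z hzU using phiSph_eq_sum q n hn z hzU
  rw [hev.iteratedDeriv_eq m]
  rw [iteratedDeriv_sum_cexp (Finset.range (n+1)) (sphCoef q n)
    (fun j => Complex.I * ((n:ℂ) - 2*(j:ℂ)) * (Real.log q : ℂ)) m]


noncomputable def Pc (N : ℕ) (c : ℕ → ℂ) (ξ : ℂ) : ℂ := ∑ m ∈ Finset.range (N+1), c m * ξ^m
noncomputable def vql (q α : ℝ) : ℂ :=
  Complex.exp (Complex.I * ((α:ℂ) - Complex.I/2) * (Real.log q : ℂ))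
noncomputable def wq (q α : ℝ) : ℂ := ((vql q α)^2)⁻¹
noncomputable def Sfun (q α : ℝ) (N : ℕ) (c : ℕ → ℂ) (n : ℕ) : ℂ :=
  ∑ m ∈ Finset.range (N+1), c m * iteratedDeriv m (fun z : ℂ => phiSph q z n) ((α:ℂ) - Complex.I/2)
noncomputable def Tfun (q α : ℝ) (N : ℕ) (c : ℕ → ℂ) (n : ℕ) : ℂ :=
  ((q:ℂ)+1) * qpow q ((n:ℂ)/2) * (vql q α) ^ (-(n:ℤ)) * Sfun q α N c n
noncomputable def Gfun (q α : ℝ) (N : ℕ) (c : ℕ → ℂ) (k : ℕ) : ℂ :=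
  ∑ j ∈ Finset.range (k+1), (wq q α)^j * Pc N c (Complex.I * ((k:ℂ) - 2*(j:ℂ)) * (Real.log q : ℂ))

lemma vql_ne_zero (q α : ℝ) : vql q α ≠ 0 := Complex.exp_ne_zero _

lemma exp_eq_v_zpow (q α : ℝ) (k : ℤ) :
    Complex.exp ((Complex.I * (k:ℂ) * (Real.log q : ℂ)) * ((α:ℂ) - Complex.I/2)) = (vql q α) ^ k := by
  rw [vql, ← Complex.exp_int_mul]
  congr 1
  push_cast
  ring

lemma wq_pow (q α : ℝ) (j : ℕ) : (wq q α) ^ j = (vql q α) ^ (-(2*(j:ℤ))) := by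
  rw [wq, inv_pow, ← pow_mul, ← zpow_natCast (vql q α) (2*j), ← zpow_neg]
  norm_num

lemma hSn (q : ℝ) (hq : 1 < q) (α : ℝ) (N : ℕ) (c : ℕ → ℂ) (n : ℕ) (hn : n ≠ 0) :
    Sfun q α N c n = ∑ j ∈ Finset.range (n+1),
      (sphCoef q n j * (vql q α) ^ ((n:ℤ) - 2*(j:ℤ))) *
        Pc N c (Complex.I * ((n:ℂ) - 2*(j:ℂ)) * (Real.log q : ℂ)) := by
  have hE : ∀ j : ℕ, Complex.exp ((Complex.I * ((n:ℂ) - 2*(j:ℂ)) * (Real.log q : ℂ)) * ((α:ℂ) - Complex.I/2))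
      = (vql q α) ^ ((n:ℤ) - 2*(j:ℤ)) := by
    intro j
    rw [← exp_eq_v_zpow q α ((n:ℤ) - 2*(j:ℤ))]
    norm_num
  calc Sfun q α N c n
      = ∑ m ∈ Finset.range (N+1), ∑ j ∈ Finset.range (n+1),
          c m * (sphCoef q n j * (Complex.I * ((n:ℂ) - 2*(j:ℂ)) * (Real.log q : ℂ)) ^ m *
            Complex.exp ((Complex.I * ((n:ℂ) - 2*(j:ℂ)) * (Real.log q : ℂ)) * ((α:ℂ) - Complex.I/2))) := by
        rw [Sfun]
        refine Finset.sum_congr rfl fun m _ => ?_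
        rw [iteratedDeriv_phiSph q hq α n hn m, Finset.mul_sum]
    _ = ∑ j ∈ Finset.range (n+1), ∑ m ∈ Finset.range (N+1),
          c m * (sphCoef q n j * (Complex.I * ((n:ℂ) - 2*(j:ℂ)) * (Real.log q : ℂ)) ^ m *
            Complex.exp ((Complex.I * ((n:ℂ) - 2*(j:ℂ)) * (Real.log q : ℂ)) * ((α:ℂ) - Complex.I/2))) :=
        Finset.sum_comm
    _ = ∑ j ∈ Finset.range (n+1),
          (sphCoef q n j * (vql q α) ^ ((n:ℤ) - 2*(j:ℤ))) *
            Pc N c (Complex.I * ((n:ℂ) - 2*(j:ℂ)) * (Real.log q : ℂ)) := by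
        refine Finset.sum_congr rfl fun j _ => ?_
        rw [Pc, Finset.mul_sum]
        refine Finset.sum_congr rfl fun m _ => ?_
        rw [hE j]
        ring

lemma hTG (q : ℝ) (hq : 1 < q) (α : ℝ) (N : ℕ) (c : ℕ → ℂ) (k : ℕ) :
    Tfun q α N c (k+2) = (q:ℂ) * Gfun q α N c (k+2) - wq q α * Gfun q α N c k := by
  have hq0 : (0:ℝ) < q := lt_trans one_pos hq
  set v := vql q α with hv
  set n := k + 2 with hndef
  have hn : n ≠ 0 := by omega
  rw [Tfun, hSn q hq α N c n hn, Finset.mul_sum]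
  have key : ∀ j ∈ Finset.range (n+1),
      ((q:ℂ)+1) * qpow q ((n:ℂ)/2) * v ^ (-(n:ℤ)) *
        ((sphCoef q n j * v ^ ((n:ℤ) - 2*(j:ℤ))) * Pc N c (Complex.I * ((n:ℂ) - 2*(j:ℂ)) * (Real.log q : ℂ)))
      = ((q:ℂ) - if j ∈ Finset.Icc 1 (n-1) then 1 else 0) *
          ((wq q α)^j * Pc N c (Complex.I * ((n:ℂ) - 2*(j:ℂ)) * (Real.log q : ℂ))) := by
    intro j _
    have hcoef : ((q:ℂ)+1) * sphCoef q n j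
        = qpow q (1 - (n:ℂ)/2) - if j ∈ Finset.Icc 1 (n-1) then qpow q (-(n:ℂ)/2) else 0 := by
      rw [sphCoef]
      have : ((q:ℂ)+1) ≠ 0 := by
        intro h
        have : (q:ℂ) = -1 := by linear_combination h
        have : q = -1 := by exact_mod_cast this
        linarith
      field_simp
    have hzp : v ^ (-(n:ℤ)) * v ^ ((n:ℤ) - 2*(j:ℤ)) = (wq q α)^j := by
      rw [← zpow_add₀ (vql_ne_zero q α), wq_pow]
      congr 1
      ring
    have hqp1 : qpow q ((n:ℂ)/2) * qpow q (1 - (n:ℂ)/2) = (q:ℂ) := by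
      rw [← qpow_add, show (n:ℂ)/2 + (1 - (n:ℂ)/2) = 1 by ring, qpow_one q hq0]
    have hqp2 : qpow q ((n:ℂ)/2) * qpow q (-(n:ℂ)/2) = 1 := by
      rw [← qpow_add, show (n:ℂ)/2 + (-(n:ℂ)/2) = 0 by ring, qpow_zero]
    calc ((q:ℂ)+1) * qpow q ((n:ℂ)/2) * v ^ (-(n:ℤ)) *
          ((sphCoef q n j * v ^ ((n:ℤ) - 2*(j:ℤ))) * Pc N c (Complex.I * ((n:ℂ) - 2*(j:ℂ)) * (Real.log q : ℂ)))
        = (qpow q ((n:ℂ)/2) * (((q:ℂ)+1) * sphCoef q n j)) * (v ^ (-(n:ℤ)) * v ^ ((n:ℤ) - 2*(j:ℤ))) *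
            Pc N c (Complex.I * ((n:ℂ) - 2*(j:ℂ)) * (Real.log q : ℂ)) := by ring
      _ = ((q:ℂ) - if j ∈ Finset.Icc 1 (n-1) then 1 else 0) *
          ((wq q α)^j * Pc N c (Complex.I * ((n:ℂ) - 2*(j:ℂ)) * (Real.log q : ℂ))) := by
          rw [hcoef, hzp]
          by_cases h : j ∈ Finset.Icc 1 (n-1)
          · simp only [h, if_true]
            rw [mul_sub, hqp1, hqp2]
            ring
          · simp only [h, if_false]
            rw [mul_sub, mul_zero, sub_zero, hqp1]
            ring
  rw [Finset.sum_congr rfl key]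
  have split : ∑ j ∈ Finset.range (n+1), ((q:ℂ) - if j ∈ Finset.Icc 1 (n-1) then 1 else 0) *
      ((wq q α)^j * Pc N c (Complex.I * ((n:ℂ) - 2*(j:ℂ)) * (Real.log q : ℂ)))
      = (q:ℂ) * Gfun q α N c n
        - ∑ j ∈ Finset.range (n+1), (if j ∈ Finset.Icc 1 (n-1) then
            (wq q α)^j * Pc N c (Complex.I * ((n:ℂ) - 2*(j:ℂ)) * (Real.log q : ℂ)) else 0) := by
    rw [Gfun, Finset.mul_sum, ← Finset.sum_sub_distrib]
    refine Finset.sum_congr rfl fun j _ => ?_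
    split_ifs <;> ring
  rw [split]
  congr 1
  rw [Finset.sum_ite_mem]
  have hss : Finset.range (n+1) ∩ Finset.Icc 1 (n-1) = Finset.Icc 1 (n-1) := by
    rw [Finset.inter_eq_right]
    intro j hj
    simp only [Finset.mem_Icc] at hj
    simp only [Finset.mem_range]
    omega
  rw [hss, show Finset.Icc 1 (n-1) = Finset.Ico 1 (n-1+1) from (Finset.Ico_add_one_right_eq_Icc _ _).symm,
    Finset.sum_Ico_eq_sum_range, show n - 1 + 1 - 1 = n - 1 by omega]
  rw [Gfun, Finset.mul_sum, show n - 1 = k + 1 by omega]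
  refine Finset.sum_congr rfl fun i _ => ?_
  have harg : (Complex.I * ((n:ℂ) - 2*((1+i:ℕ):ℂ)) * (Real.log q : ℂ))
      = (Complex.I * ((k:ℂ) - 2*(i:ℂ)) * (Real.log q : ℂ)) := by
    rw [hndef]
    push_cast
    ring
  rw [harg]
  ring

lemma hGrec (q α : ℝ) (N : ℕ) (c : ℕ → ℂ) (k : ℕ) :
    Gfun q α N c (k+2) = Pc N c (Complex.I * ((k:ℂ)+2) * (Real.log q : ℂ))
      + wq q α * Gfun q α N c k
      + (wq q α)^(k+2) * Pc N c (-(Complex.I * ((k:ℂ)+2) * (Real.log q : ℂ))) := by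
  rw [Gfun, show k+2+1 = (k+2)+1 from rfl, Finset.sum_range_succ']
  have h0 : (wq q α)^0 * Pc N c (Complex.I * (((k+2:ℕ):ℂ) - 2*((0:ℕ):ℂ)) * (Real.log q : ℂ))
      = Pc N c (Complex.I * ((k:ℂ)+2) * (Real.log q : ℂ)) := by
    rw [pow_zero, one_mul]
    congr 2
    push_cast
    ring
  rw [h0]
  have h1 : ∑ j ∈ Finset.range (k+2), (wq q α)^(j+1) *
      Pc N c (Complex.I * (((k+2:ℕ):ℂ) - 2*((j+1:ℕ):ℂ)) * (Real.log q : ℂ))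
      = wq q α * (∑ j ∈ Finset.range (k+2), (wq q α)^j *
          Pc N c (Complex.I * ((k:ℂ) - 2*(j:ℂ)) * (Real.log q : ℂ))) := by
    rw [Finset.mul_sum]
    refine Finset.sum_congr rfl fun j _ => ?_
    have harg : (Complex.I * (((k+2:ℕ):ℂ) - 2*((j+1:ℕ):ℂ)) * (Real.log q : ℂ))
        = (Complex.I * ((k:ℂ) - 2*(j:ℂ)) * (Real.log q : ℂ)) := by
      push_cast
      ring
    rw [harg]
    ring
  rw [h1, Finset.sum_range_succ]
  have harg2 : (Complex.I * ((k:ℂ) - 2*(((k+1:ℕ)):ℂ)) * (Real.log q : ℂ))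
      = -(Complex.I * ((k:ℂ)+2) * (Real.log q : ℂ)) := by
    push_cast
    ring
  rw [harg2, ← Gfun]
  ring


lemma norm_vql (q α : ℝ) : ‖vql q α‖ = Real.exp (Real.log q / 2) := by
  rw [vql, Complex.norm_exp, re_aux]

lemma norm_wq (q α : ℝ) (hq : 1 < q) : ‖wq q α‖ < 1 := by
  rw [wq, norm_inv, norm_pow, norm_vql]
  rw [← Real.exp_nat_mul]
  rw [inv_lt_one_iff₀]
  right
  rw [Real.one_lt_exp_iff]
  have := Real.log_pos hq
  positivity

lemma norm_Tfun (q : ℝ) (hq : 1 < q) (α : ℝ) (N : ℕ) (c : ℕ → ℂ) (M₀ : ℝ)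
    (hM : ∀ n : ℕ, ‖Sfun q α N c n‖ ≤ M₀) (n : ℕ) :
    ‖Tfun q α N c n‖ ≤ (q+1) * M₀ := by
  have hq0 : (0:ℝ) < q := lt_trans one_pos hq
  rw [Tfun, norm_mul, norm_mul, norm_mul]
  have h1 : ‖((q:ℂ)+1)‖ = q + 1 := by
    rw [show ((q:ℂ)+1) = ((q+1 : ℝ):ℂ) by push_cast; ring, Complex.norm_real,
      Real.norm_of_nonneg (by linarith)]
  have h2 : ‖qpow q ((n:ℂ)/2)‖ = Real.exp ((n:ℝ) * (Real.log q / 2)) := by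
    rw [qpow, Complex.norm_exp]
    congr 1
    rw [show ((n:ℂ)/2 * ((Real.log q : ℝ):ℂ)) = (((n:ℝ) * (Real.log q / 2) : ℝ) : ℂ) by push_cast; ring]
    exact Complex.ofReal_re _
  have h3 : ‖(vql q α) ^ (-(n:ℤ))‖ = (Real.exp ((n:ℝ) * (Real.log q / 2)))⁻¹ := by
    rw [norm_zpow, norm_vql, zpow_neg, zpow_natCast, ← Real.exp_nat_mul]
  rw [h1, h2, h3, mul_assoc (q+1), mul_inv_cancel₀ (Real.exp_ne_zero _), mul_one]
  exact mul_le_mul_of_nonneg_left (hM n) (by linarith)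

lemma hQid (q : ℝ) (hq : 1 < q) (α : ℝ) (N : ℕ) (c : ℕ → ℂ) (k : ℕ) :
    (q:ℂ) * Pc N c (Complex.I * ((k:ℂ)+4) * (Real.log q : ℂ))
      - wq q α * Pc N c (Complex.I * ((k:ℂ)+2) * (Real.log q : ℂ))
    = Tfun q α N c (k+4) - wq q α * Tfun q α N c (k+2)
      - (q:ℂ) * (wq q α)^(k+4) * Pc N c (-(Complex.I * ((k:ℂ)+4) * (Real.log q : ℂ)))
      + (wq q α)^(k+3) * Pc N c (-(Complex.I * ((k:ℂ)+2) * (Real.log q : ℂ))) := by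
  have h1 : Tfun q α N c (k+4) = (q:ℂ) * Gfun q α N c (k+4) - wq q α * Gfun q α N c (k+2) :=
    hTG q hq α N c (k+2)
  have h2 : Tfun q α N c (k+2) = (q:ℂ) * Gfun q α N c (k+2) - wq q α * Gfun q α N c k :=
    hTG q hq α N c k
  have h3 : Gfun q α N c (k+4) = Pc N c (Complex.I * ((k:ℂ)+4) * (Real.log q : ℂ))
      + wq q α * Gfun q α N c (k+2)
      + (wq q α)^(k+4) * Pc N c (-(Complex.I * ((k:ℂ)+4) * (Real.log q : ℂ))) := by
    have := hGrec q α N c (k+2)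
    have harg : (Complex.I * (((k+2:ℕ):ℂ)+2) * (Real.log q : ℂ))
        = Complex.I * ((k:ℂ)+4) * (Real.log q : ℂ) := by push_cast; ring
    rw [harg] at this
    exact this
  have h4 := hGrec q α N c k
  rw [h1, h2, h3, h4]
  ring

theorem key_step (q : ℝ) (hq : 1 < q) (α : ℝ) (N : ℕ) (c : ℕ → ℂ) (M₀ : ℝ)
    (hM : ∀ n : ℕ, ‖Sfun q α N c n‖ ≤ M₀)
    (M : ℕ) (hM1 : 1 ≤ M) (hMN : M ≤ N)
    (hzero : ∀ j, M < j → j ≤ N → c j = 0) : c M = 0 := by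
  have hq0 : (0:ℝ) < q := lt_trans one_pos hq
  set w := wq q α with hwdef
  have hwlt : ‖w‖ < 1 := norm_wq q α hq
  set L : ℝ := Real.log q with hLdef
  have hLpos : 0 < L := Real.log_pos hq
  have hTb : ∀ n : ℕ, ‖Tfun q α N c n‖ ≤ (q+1) * M₀ := norm_Tfun q hq α N c M₀ hM
  have hCnn : 0 ≤ (q+1) * M₀ := le_trans (norm_nonneg _) (hTb 0)
  -- T (k+a) / k^M → 0
  have hTd : ∀ a : ℕ, Tendsto (fun k : ℕ => Tfun q α N c (k+a) / (k:ℂ)^M) atTop (𝓝 0) := by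
    intro a
    refine squeeze_zero_norm' (a := fun k : ℕ => ((q+1)*M₀) * ((1:ℝ)/(k:ℝ))^M) ?_ ?_
    · filter_upwards [] with k
      rw [norm_div, norm_pow, Complex.norm_natCast]
      rcases Nat.eq_zero_or_pos k with hk | hk
      · subst hk
        simp [zero_pow (by omega : M ≠ 0)]
      · have hk0 : (0:ℝ) < (k:ℝ) := by exact_mod_cast hk
        calc ‖Tfun q α N c (k+a)‖ / (k:ℝ)^M ≤ ((q+1)*M₀) / (k:ℝ)^M :=
              (div_le_div_iff_of_pos_right (by positivity)).mpr (hTb (k+a))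
          _ = ((q+1)*M₀) * ((1:ℝ)/(k:ℝ))^M := by rw [div_pow, one_pow, div_eq_mul_inv, div_eq_mul_inv, one_mul]
    · have := (tendsto_one_div_atTop_nhds_zero_nat.pow M).const_mul ((q+1)*M₀)
      simpa [zero_pow (by omega : M ≠ 0)] using this
  -- epsilon terms → 0
  have hEgen : ∀ (a : ℕ) (b s : ℂ),
      Tendsto (fun k : ℕ => s * w^(k+a) * Pc N c (-(Complex.I*((k:ℂ)+b)*(L:ℂ)))) atTop (𝓝 0) := by
    intro a b s
    have base := (tendsto_eps w hwlt N c (-(Complex.I*(L:ℂ))) b).const_mul (s * w^a)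
    rw [mul_zero] at base
    refine base.congr fun k => ?_
    have hsum : ∑ m ∈ Finset.range (N+1), c m * ((-(Complex.I*(L:ℂ)))*((k:ℂ)+b))^m
        = Pc N c (-(Complex.I*((k:ℂ)+b)*(L:ℂ))) := by
      rw [Pc]
      refine Finset.sum_congr rfl fun m _ => ?_
      rw [show (-(Complex.I*(L:ℂ)))*((k:ℂ)+b) = -(Complex.I*((k:ℂ)+b)*(L:ℂ)) by ring]
    rw [hsum, pow_add]
    ring
  have hE1 : Tendsto (fun k : ℕ => (q:ℂ) * w^(k+4) * Pc N c (-(Complex.I*((k:ℂ)+4)*(L:ℂ)))) atTop (𝓝 0) :=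
    hEgen 4 4 (q:ℂ)
  have hE2 : Tendsto (fun k : ℕ => w^(k+3) * Pc N c (-(Complex.I*((k:ℂ)+2)*(L:ℂ)))) atTop (𝓝 0) := by
    have := hEgen 3 2 1
    simpa using this
  have hInvM : Tendsto (fun k : ℕ => (((k:ℕ):ℂ)^M)⁻¹) atTop (𝓝 0) := by
    have := tendsto_inv_nat_complex.pow M
    rw [zero_pow (by omega : M ≠ 0)] at this
    refine this.congr fun k => ?_
    rw [inv_pow]
  -- limit 1 : Qf k / k^M → 0
  have lim0 : Tendsto (fun k : ℕ =>
      ((q:ℂ) * Pc N c (Complex.I * ((k:ℂ)+4) * (L:ℂ))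
        - w * Pc N c (Complex.I * ((k:ℂ)+2) * (L:ℂ))) / (k:ℂ)^M) atTop (𝓝 0) := by
    have comb := (((hTd 4).sub ((hTd 2).const_mul w)).sub
        ((hE1.mul hInvM))).add ((hE2.mul hInvM))
    refine Tendsto.congr (fun k => ?_) (by simpa using comb)
    rw [hQid q hq α N c k, ← hwdef, ← hLdef]
    ring
  -- limit 2 : Qf k / k^M → c M * (I L)^M * (q - w)
  have lim1 : Tendsto (fun k : ℕ =>
      ((q:ℂ) * Pc N c (Complex.I * ((k:ℂ)+4) * (L:ℂ))
        - w * Pc N c (Complex.I * ((k:ℂ)+2) * (L:ℂ))) / (k:ℂ)^M) atTop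
      (𝓝 (c M * (Complex.I*(L:ℂ))^M * ((q:ℂ) - w))) := by
    have hpt : ∀ k : ℕ,
        ((q:ℂ) * Pc N c (Complex.I * ((k:ℂ)+4) * (L:ℂ))
          - w * Pc N c (Complex.I * ((k:ℂ)+2) * (L:ℂ))) / (k:ℂ)^M
        = ∑ m ∈ Finset.range (N+1), (c m * (Complex.I*(L:ℂ))^m) *
            ((q:ℂ)*(((k:ℂ)+4)^m/((k:ℂ)^M)) - w*(((k:ℂ)+2)^m/((k:ℂ)^M))) := by
      intro k
      rw [Pc, Pc, Finset.mul_sum, Finset.mul_sum, ← Finset.sum_sub_distrib, Finset.sum_div]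
      refine Finset.sum_congr rfl fun m _ => ?_
      rw [show Complex.I*((k:ℂ)+4)*(L:ℂ) = (Complex.I*(L:ℂ))*((k:ℂ)+4) by ring,
        show Complex.I*((k:ℂ)+2)*(L:ℂ) = (Complex.I*(L:ℂ))*((k:ℂ)+2) by ring,
        mul_pow (Complex.I*(L:ℂ)) ((k:ℂ)+4) m, mul_pow (Complex.I*(L:ℂ)) ((k:ℂ)+2) m]
      ring
    have hsum : Tendsto (fun k : ℕ => ∑ m ∈ Finset.range (N+1), (c m * (Complex.I*(L:ℂ))^m) *
        ((q:ℂ)*(((k:ℂ)+4)^m/((k:ℂ)^M)) - w*(((k:ℂ)+2)^m/((k:ℂ)^M)))) atTop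
        (𝓝 (∑ m ∈ Finset.range (N+1), if m = M then c M * (Complex.I*(L:ℂ))^M * ((q:ℂ) - w) else 0)) := by
      refine tendsto_finset_sum _ fun m hm => ?_
      have hmN : m ≤ N := by simp only [Finset.mem_range] at hm; omega
      by_cases hmM : m ≤ M
      · have := (((tendsto_ratio 4 m M hmM).const_mul (q:ℂ)).sub
          ((tendsto_ratio 2 m M hmM).const_mul w)).const_mul (c m * (Complex.I*(L:ℂ))^m)
        by_cases h : m = M
        · subst h
          simpa using this
        · simp only [h, if_false] at this ⊢
          simpa using this
      · have hcm : c m = 0 := hzero m (by omega) hmN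
        have h : m ≠ M := by omega
        simp only [h, if_false, hcm]
        simpa using (tendsto_const_nhds : Tendsto (fun _ : ℕ => (0:ℂ)) atTop (𝓝 0))
    rw [Finset.sum_ite_eq' (Finset.range (N+1)) M
      (fun _ => c M * (Complex.I*(L:ℂ))^M * ((q:ℂ) - w)),
      if_pos (by simp only [Finset.mem_range]; omega)] at hsum
    exact Tendsto.congr (fun k => (hpt k).symm) hsum
  have hz : c M * (Complex.I*(L:ℂ))^M * ((q:ℂ) - w) = 0 := tendsto_nhds_unique lim1 lim0
  have hIL : (Complex.I*(L:ℂ))^M ≠ 0 := by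
    apply pow_ne_zero
    apply mul_ne_zero Complex.I_ne_zero
    exact_mod_cast ne_of_gt hLpos
  have hqw : (q:ℂ) - w ≠ 0 := by
    intro h
    have : w = (q:ℂ) := by linear_combination -h
    rw [this] at hwlt
    rw [Complex.norm_real, Real.norm_of_nonneg (by linarith)] at hwlt
    linarith
  rcases mul_eq_zero.mp hz with h | h
  · rcases mul_eq_zero.mp h with h' | h'
    · exact h'
    · exact absurd h' hIL
  · exact absurd h hqw

/-- If at `z₀ = α - i/2` the quantities
`|∑_{m=0}^{N} c_m · (d/dz)^m φ_z(n) |_{z=z₀}|` are bounded uniformly in `n ∈ ℕ`, then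
`c_m = 0` for `1 ≤ m ≤ N`. -/
theorem stmt18 (q : ℝ) (hq : 1 < q) (α : ℝ) (N : ℕ) (c : ℕ → ℂ)
    (hbd : ∃ M : ℝ, ∀ n : ℕ,
      ‖(∑ m ∈ Finset.range (N + 1),
        c m * iteratedDeriv m (fun z : ℂ => phiSph q z n) ((α : ℂ) - Complex.I / 2))‖ ≤ M) :
    ∀ m : ℕ, 1 ≤ m → m ≤ N → c m = 0 := by
  obtain ⟨M₀, hM₀⟩ := hbd
  have hM : ∀ n : ℕ, ‖Sfun q α N c n‖ ≤ M₀ := by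
    intro n
    rw [Sfun]
    exact hM₀ n
  have key : ∀ m, 1 ≤ m → m ≤ N → (∀ j, m < j → j ≤ N → c j = 0) → c m = 0 :=
    fun m h1 h2 h3 => key_step q hq α N c M₀ hM m h1 h2 h3
  suffices H : ∀ d : ℕ, ∀ m, 1 ≤ m → m ≤ N → N - m ≤ d → c m = 0 by
    intro m hm1 hmN
    exact H N m hm1 hmN (by omega)
  intro d
  induction d with
  | zero =>
    intro m h1 h2 h3
    exact key m h1 h2 (fun j hj1 hj2 => absurd hj2 (by omega))
  | succ d ih =>
    intro m h1 h2 h3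
    exact key m h1 h2 (fun j hj1 hj2 => ih j (by omega) hj2 (by omega))
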